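/- Let (K,U) be a weak ℵ₀-concrete AEC. If M is an object of size μ and M̄ and N̄ are, respectively, a (μ,δ)-limit object and a (μ,μ×δ)-limit object over M, with δ < μ⁺ a limit ordinal, then M̄ ≅ N̄. -/

import Mathlib

/-!
Common framework: weak κ-concrete AECs (Lieberman–Rosický,
"Approximations of superstability in concrete accessible categories").
-/

universe u

open CategoryTheory CategoryTheory.Limits Cardinal

namespace CAEC

/-- A preorder is `κ`-directed if every subset of cardinality `< κ` has an upper bound. -/
def CardDirected (κ : Cardinal.{u}) (P : Type u) [Preorder P] : Prop :=
  ∀ s : Set P, #s < κ → ∃ ub : P, ∀ x ∈ s, x ≤ ub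

/-- The sharp inequality `lam ⊳ κ` of Adámek–Rosický (characterization 2.13): `lam ≥ κ` and
for every set `X` of cardinality `< lam`, the poset of subsets of `X` of cardinality `< κ`
has a cofinal subset of cardinality `< lam`. -/
def SharplyGreater (lam κ : Cardinal.{u}) : Prop :=
  κ ≤ lam ∧ ∀ X : Type u, #X < lam →
    ∃ S : Set {s : Set X // #s < κ}, #S < lam ∧
      ∀ t : Set X, #t < κ → ∃ s ∈ S, t ⊆ s.1

section Presentability

variable (K : Type u) [Category.{u} K]

/-- An object `A` is `lam`-presentable if its hom-functor preserves colimits of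
`lam`-directed diagrams. -/
def IsPresentableObj (lam : Cardinal.{u}) (A : K) : Prop :=
  ∀ (P : Type u) [Preorder P], CardDirected lam P →
    Nonempty (PreservesColimitsOfShape P (coyoneda.obj (Opposite.op A)))

/-- The size of an object: the least `μ` such that `A` is `μ⁺`-presentable
(the presentability rank of `A` is `μ⁺`). -/
noncomputable def objSize (A : K) : Cardinal.{u} :=
  sInf {μ : Cardinal.{u} | IsPresentableObj K (Order.succ μ) A}

/-- `K` is a `lam`-accessible category: `lam` is regular, `K` has `lam`-directed colimits and
there is a set of `lam`-presentable objects such that every object is a `lam`-directed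
colimit of objects from it. -/
def IsAccessibleCat (lam : Cardinal.{u}) : Prop :=
  lam.IsRegular ∧
  (∀ (P : Type u) [Preorder P] [Nonempty P], CardDirected lam P → HasColimitsOfShape P K) ∧
  ∃ S : Set K, (∀ A ∈ S, IsPresentableObj K lam A) ∧
    ∀ A : K, ∃ (P : Preord.{u}) (D : P ⥤ K),
      CardDirected lam P ∧ (∀ p : P, D.obj p ∈ S) ∧
      ∃ c : Cocone D, c.pt = A ∧ Nonempty (IsColimit c)

end Presentability

/-- A weak `(κ, lam)`-concrete AEC: a `lam`-accessible category `K` with directed colimits,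
all morphisms monomorphisms, together with a faithful functor `U : K ⥤ Set` which is
coherent, has concrete monomorphisms and preserves `κ`-directed colimits.  As is standard,
we also assume amalgamation, joint embedding and largeness (arbitrarily large objects). -/
structure WeakCAEC (κ lam : Cardinal.{u}) : Type (u + 1) where
  K : Type u
  [instCat : Category.{u} K]
  U : K ⥤ Type u
  faithful : U.Faithful
  allMono : ∀ {A B : K} (f : A ⟶ B), Mono f
  hasDirectedColimits : ∀ (P : Type u) [Preorder P] [IsDirected P (· ≤ ·)] [Nonempty P],
    HasColimitsOfShape P K
  concreteMono : ∀ {A B : K} (f : A ⟶ B), Function.Injective (U.map f)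
  coherent : ∀ {A B C : K} (f : A ⟶ C) (g : B ⟶ C) (t : U.obj A → U.obj B),
    U.map g ∘ t = U.map f → ∃ h : A ⟶ B, U.map h = t ∧ h ≫ g = f
  preservesKDirected : ∀ (P : Type u) [Preorder P], CardDirected κ P →
    Nonempty (PreservesColimitsOfShape P U)
  accessible : IsAccessibleCat K lam
  amalgamation : ∀ {A B C : K} (f : A ⟶ B) (g : A ⟶ C),
    ∃ (D : K) (u : B ⟶ D) (v : C ⟶ D), f ≫ u = g ≫ v
  jointEmbedding : ∀ A B : K, ∃ (D : K) (_ : A ⟶ D) (_ : B ⟶ D), True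
  large : ∀ μ : Cardinal.{u}, ∃ M : K, μ ≤ objSize K M

attribute [instance] WeakCAEC.instCat

namespace WeakCAEC

variable {κ lam : Cardinal.{u}} (W : WeakCAEC κ lam)

/-- The size of an object of `W` (its presentability rank is `size⁺`). -/
noncomputable def size (A : W.K) : Cardinal.{u} := objSize W.K A

/-- Galois types over `M`: pairs of a morphism `f : M ⟶ N` and an element of `U N`. -/
def GType (M : W.K) : Type u := Σ N : W.K, (M ⟶ N) × W.U.obj N

/-- Equivalence of Galois types over `M`, via amalgamation: `(f, a)` and `(g, b)` are
equivalent if they can be equalized by a pair of morphisms into a common extension. -/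
def TypeEq {M : W.K} (x y : W.GType M) : Prop :=
  ∃ (R : W.K) (u : x.1 ⟶ R) (v : y.1 ⟶ R),
    x.2.1 ≫ u = y.2.1 ≫ v ∧ W.U.map u x.2.2 = W.U.map v y.2.2

/-- `M'` realizes all Galois types over `M` via `g : M ⟶ M'`. -/
def RealizesAll {M M' : W.K} (g : M ⟶ M') : Prop :=
  ∀ (P : W.K) (f : M ⟶ P) (a : W.U.obj P), ∃ b : W.U.obj M',
    W.TypeEq ⟨P, f, a⟩ ⟨M', g, b⟩

/-- `W` is `μ`-stable: there are at most `μ` Galois types over any object of size `μ`. -/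
def Stable (μ : Cardinal.{u}) : Prop :=
  ∀ M : W.K, W.size M = μ → #(Quot (W.TypeEq (M := M))) ≤ μ

/-- `M` is `μ`-saturated: every Galois type over a subobject of size `< μ` is realized. -/
def Saturated (μ : Cardinal.{u}) (M : W.K) : Prop :=
  ∀ (M₀ : W.K) (f : M₀ ⟶ M), W.size M₀ < μ → W.RealizesAll f

/-- `M` is saturated if it is `|M|`-saturated. -/
def SaturatedObj (M : W.K) : Prop := W.Saturated (W.size M) M

/-- `M'` is `μ`-universal over `M`, witnessed by `m : M ⟶ M'`: every `h : M ⟶ N` with `N`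
of size at most `μ` factors through `m`. -/
def UniversalVia (μ : Cardinal.{u}) {M M' : W.K} (m : M ⟶ M') : Prop :=
  ∀ (N : W.K) (h : M ⟶ N), W.size N ≤ μ → ∃ t : N ⟶ M', h ≫ t = m

/-- `λ_U`: the least cardinal `ρ` such that `U` preserves `ρ`-presentable objects. -/
noncomputable def lamU : Cardinal.{u} :=
  sInf {ρ : Cardinal.{u} | ∀ A : W.K, IsPresentableObj W.K ρ A → #(W.U.obj A) < ρ}

/-- `W` is `ν`-categorical: it has exactly one object of size `ν` up to isomorphism. -/
def Categorical (ν : Cardinal.{u}) : Prop :=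
  (∃ M : W.K, W.size M = ν) ∧
  ∀ M N : W.K, W.size M = ν → W.size N = ν → Nonempty (M ≅ N)

end WeakCAEC

section Chains

variable (K : Type u) [Category.{u} K]

/-- A chain of objects of `K` indexed by the ordinals below `δ`. -/
structure OChain (δ : Ordinal.{u}) : Type (u + 1) where
  obj : ∀ i : Ordinal.{u}, i < δ → K
  map : ∀ (i j : Ordinal.{u}) (hij : i ≤ j) (hj : j < δ),
    obj i (lt_of_le_of_lt hij hj) ⟶ obj j hj
  map_id : ∀ (i : Ordinal.{u}) (h : i < δ), map i i le_rfl h = 𝟙 (obj i h)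
  map_comp : ∀ (i j k : Ordinal.{u}) (hij : i ≤ j) (hjk : j ≤ k) (hk : k < δ),
    map i k (hij.trans hjk) hk =
      map i j hij (lt_of_le_of_lt hjk hk) ≫ map j k hjk hk

namespace OChain

variable {K} {δ : Ordinal.{u}} (C : OChain K δ)

/-- The restriction of a chain to the ordinals below `i ≤ δ`, as a diagram. -/
def diag (i : Ordinal.{u}) (hi : i ≤ δ) : {j : Ordinal.{u} // j < i} ⥤ K where
  obj j := C.obj j.1 (lt_of_lt_of_le j.2 hi)
  map {j k} f := C.map j.1 k.1 (leOfHom f) _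
  map_id _ := C.map_id _ _
  map_comp _ _ := C.map_comp _ _ _ _ _ _

/-- The cocone over the restriction of the chain below `i` with apex the `i`-th object. -/
def coconeAt (i : Ordinal.{u}) (hi : i < δ) : Cocone (C.diag i hi.le) where
  pt := C.obj i hi
  ι :=
    { app := fun j => C.map j.1 i j.2.le hi
      naturality := by
        intro j k f
        dsimp [diag]
        rw [Category.comp_id, ← C.map_comp] }

/-- The chain is continuous: at every limit ordinal, the chain is the colimit of its
restriction. -/
def IsContinuous : Prop :=
  ∀ (i : Ordinal.{u}) (hi : i < δ), Order.IsSuccLimit i → Nonempty (IsColimit (C.coconeAt i hi))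

/-- `N` is a colimit of the chain `C`. -/
def IsColimitOf (N : K) : Prop :=
  ∃ c : Cocone (C.diag δ le_rfl), c.pt = N ∧ Nonempty (IsColimit c)

end OChain

end Chains

namespace WeakCAEC

variable {κ lam : Cardinal.{u}} (W : WeakCAEC κ lam)

/-- A `(μ, δ)`-chain: a continuous chain of objects of size `μ` in which each successor is
`μ`-universal over its predecessor. -/
def IsMuChain (μ : Cardinal.{u}) {δ : Ordinal.{u}} (C : OChain W.K δ) : Prop :=
  C.IsContinuous ∧ (∀ (i : Ordinal.{u}) (h : i < δ), W.size (C.obj i h) = μ) ∧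
  ∀ (i : Ordinal.{u}) (hi : i + 1 < δ),
    W.UniversalVia μ (C.map i (i + 1) le_self_add hi)

/-- `M̄` is a `(μ, δ)`-limit object over `M₀`: the colimit of a `(μ, δ)`-chain
(with `δ` a limit ordinal) whose first term is `M₀`. -/
def IsLimitObjOver (μ : Cardinal.{u}) (δ : Ordinal.{u}) (M₀ Mbar : W.K) : Prop :=
  Order.IsSuccLimit δ ∧ ∃ C : OChain W.K δ, W.IsMuChain μ C ∧
    (∃ h0 : (0 : Ordinal.{u}) < δ, C.obj 0 h0 = M₀) ∧ C.IsColimitOf Mbar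

/-- A `1`-special chain: a continuous chain of objects of size `μ` in which each successor
realizes all Galois types over its predecessor. -/
def OneSpecialChain (μ : Cardinal.{u}) {δ : Ordinal.{u}} (C : OChain W.K δ) : Prop :=
  C.IsContinuous ∧ (∀ (i : Ordinal.{u}) (h : i < δ), W.size (C.obj i h) = μ) ∧
  ∀ (i : Ordinal.{u}) (hi : i + 1 < δ),
    W.RealizesAll (C.map i (i + 1) le_self_add hi)

/-- `N` is a `1`-special extension of `M` (both of size `μ`): `N` is the colimit of a
continuous chain of length `μ` starting at `M`, of objects of size `μ`, in which each
successor realizes all Galois types over its predecessor. -/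
def OneSpecial (μ : Cardinal.{u}) (M N : W.K) : Prop :=
  ∃ C : OChain W.K μ.ord, W.OneSpecialChain μ C ∧
    (∃ h0 : (0 : Ordinal.{u}) < μ.ord, C.obj 0 h0 = M) ∧ C.IsColimitOf N

/-- `m : M ⟶ M̄` exhibits `M̄` as a `1`-special extension of `M`, with `m` the colimit
injection of the first term of the witnessing chain. -/
def OneSpecialVia (μ : Cardinal.{u}) {M Mbar : W.K} (m : M ⟶ Mbar) : Prop :=
  ∃ C : OChain W.K μ.ord, W.OneSpecialChain μ C ∧
    ∃ (h0 : (0 : Ordinal.{u}) < μ.ord) (hM : C.obj 0 h0 = M)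
      (c : Cocone (C.diag μ.ord le_rfl)) (_ : IsColimit c) (hpt : c.pt = Mbar),
      eqToHom hM.symm ≫ c.ι.app ⟨0, h0⟩ ≫ eqToHom hpt = m

end WeakCAEC

end CAEC
namespace CAEC

/-- The category `Lin` of linear orders and order embeddings. -/
structure LinCat : Type (u + 1) where
  carrier : Type u
  [str : LinearOrder carrier]

attribute [instance] LinCat.str

instance : Category.{u} LinCat.{u} where
  Hom A B := A.carrier ↪o B.carrier
  id A := (OrderIso.refl A.carrier).toOrderEmbedding
  comp f g := f.trans g
  id_comp _ := RelEmbedding.ext fun _ => rfl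
  comp_id _ := RelEmbedding.ext fun _ => rfl
  assoc _ _ _ := RelEmbedding.ext fun _ => rfl

/-- The linear order `μ` (the initial ordinal of `μ`), as an object of `Lin`. -/
noncomputable def linOfCard (μ : Cardinal.{u}) : LinCat.{u} := ⟨μ.ord.ToType⟩

/-- `μ^{<ω}`: the lexicographically ordered set of finite sequences from `μ`,
as an object of `Lin`. -/
noncomputable def linPowOmega (μ : Cardinal.{u}) : LinCat.{u} := ⟨List μ.ord.ToType⟩

/-- `J` contains an increasing sequence of length (the initial ordinal of) `θ`. -/
def HasIncreasingSeq (J : LinCat.{u}) (θ : Cardinal.{u}) : Prop :=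
  Nonempty (θ.ord.ToType ↪o J.carrier)

/-- The canonical order embedding `a.toType ↪o b.toType` for ordinals `a ≤ b`. -/
noncomputable def toTypeEmb {a b : Ordinal.{u}} (h : a ≤ b) : a.ToType ↪o b.ToType :=
  ((@Ordinal.ToType.mk a).symm.toOrderEmbedding.trans
    (OrderEmbedding.ofMapLEIff (fun x => (⟨x.1, lt_of_lt_of_le x.2 h⟩ : Set.Iio b))
      (fun _ _ => Iff.rfl))).trans (@Ordinal.ToType.mk b).toOrderEmbedding

/-- Extend an order embedding to lexicographic products (fixed second factor). -/
def lexEmb {A B C : Type u} [LinearOrder A] [LinearOrder B] [LinearOrder C]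
    (f : A ↪o B) : (A ×ₗ C) ↪o (B ×ₗ C) :=
  OrderEmbedding.ofMapLEIff
    (fun x => toLex (f (ofLex x).1, (ofLex x).2))
    (by
      intro x y
      show toLex (f (ofLex x).1, (ofLex x).2) ≤ toLex (f (ofLex y).1, (ofLex y).2) ↔
        toLex (ofLex x) ≤ toLex (ofLex y)
      rw [Prod.Lex.le_iff, Prod.Lex.le_iff]
      constructor
      · rintro (h | ⟨h1, h2⟩)
        · exact Or.inl (f.lt_iff_lt.mp h)
        · exact Or.inr ⟨f.injective h1, h2⟩
      · rintro (h | ⟨h1, h2⟩)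
        · exact Or.inl (f.lt_iff_lt.mpr h)
        · exact Or.inr ⟨congrArg f h1, h2⟩)

/-- The ordered sum `I × α` of `α` copies of the linear order `I`. -/
noncomputable def linOrdMul (I : LinCat.{u}) (α : Ordinal.{u}) : LinCat.{u} :=
  ⟨α.ToType ×ₗ I.carrier⟩

/-- The canonical embedding `I × α ↪ I × β` for `α ≤ β`, as a morphism of `Lin`. -/
noncomputable def linOrdMulHom (I : LinCat.{u}) {α β : Ordinal.{u}} (h : α ≤ β) :
    linOrdMul I α ⟶ linOrdMul I β :=
  lexEmb (toTypeEmb h)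

end CAEC

open CategoryTheory CategoryTheory.Limits Cardinal Ordinal

namespace CAECAux

open CAEC

variable {lam : Cardinal.{u}}

lemma OChain_obj_congr {K : Type u} [Category.{u} K] {δ : Ordinal.{u}} (E : OChain K δ)
    {a b : Ordinal.{u}} (e : a = b) (ha : a < δ) : E.obj a ha = E.obj b (e ▸ ha) := by
  subst e; rfl

structure LSetup (W : WeakCAEC Cardinal.aleph0 lam) (μ : Cardinal.{u}) (δ : Ordinal.{u}) :
    Type (u + 1) where
  hδ : Order.IsSuccLimit δ
  hε : Order.IsSuccLimit (μ.ord * δ)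
  C : OChain W.K δ
  D : OChain W.K (μ.ord * δ)
  hC : W.IsMuChain μ C
  hD : W.IsMuChain μ D
  M : W.K
  h0δ : (0 : Ordinal.{u}) < δ
  h0ε : (0 : Ordinal.{u}) < μ.ord * δ
  hM0 : C.obj 0 h0δ = M
  hN0 : D.obj 0 h0ε = M

namespace LSetup

variable {W : WeakCAEC Cardinal.aleph0 lam} {μ : Cardinal.{u}} {δ : Ordinal.{u}}

lemma hμ (S : LSetup W μ δ) : (0 : Ordinal.{u}) < μ.ord := by
  rcases eq_or_ne μ.ord 0 with h | h
  · exfalso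
    have := S.hε.pos
    rw [h, zero_mul] at this
    exact lt_irrefl _ this
  · exact pos_iff_ne_zero.2 h

lemma blt (S : LSetup W μ δ) {i : Ordinal.{u}} (hi : i < δ) : μ.ord * i < μ.ord * δ :=
  (mul_lt_mul_iff_right₀ S.hμ).2 hi

lemma ble (S : LSetup W μ δ) {i j : Ordinal.{u}} (h : i ≤ j) : μ.ord * i ≤ μ.ord * j :=
  mul_le_mul_right h _

lemma slt (S : LSetup W μ δ) {i : Ordinal.{u}} (hi : i < δ) : i + 1 < δ := S.hδ.succ_lt hi

lemma bslt (S : LSetup W μ δ) {i : Ordinal.{u}} (hi : i < δ) : μ.ord * i + 1 < μ.ord * δ :=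
  S.hε.succ_lt (S.blt hi)

lemma bsle (S : LSetup W μ δ) (i : Ordinal.{u}) : μ.ord * i + 1 ≤ μ.ord * (i + 1) := by
  rw [mul_add, mul_one]
  exact add_le_add_right (Order.one_le_iff_pos.2 S.hμ) _

lemma exIdx (S : LSetup W μ δ) {j : Ordinal.{u}} (hj : j < μ.ord * δ) :
    ∃ i, i < δ ∧ j ≤ μ.ord * i := by
  obtain ⟨i, hi, hlt⟩ := (lt_mul_iff_of_isSuccLimit S.hδ).1 hj
  exact ⟨i, hi, hlt.le⟩

variable (S : LSetup W μ δ)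

lemma sizeC {i : Ordinal.{u}} (hi : i < δ) : W.size (S.C.obj i hi) ≤ μ :=
  le_of_eq (S.hC.2.1 i hi)

lemma sizeD {j : Ordinal.{u}} (hj : j < μ.ord * δ) : W.size (S.D.obj j hj) ≤ μ :=
  le_of_eq (S.hD.2.1 j hj)

/-- The motive of the transfinite recursion. -/
abbrev Mot (i : Ordinal.{u}) : Type u :=
  ∀ hi : i < δ, Option (S.C.obj i hi ⟶ S.D.obj (μ.ord * i) (S.blt hi))

noncomputable def fzero : S.Mot 0 := fun h0 =>
  some (eqToHom (by
    refine S.hM0.trans (S.hN0.symm.trans ?_)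
    exact OChain_obj_congr S.D (mul_zero μ.ord).symm S.h0ε))

noncomputable def fsucc (j : Ordinal.{u}) (ih : S.Mot j) : S.Mot (j + 1) := fun hj1 =>
  (ih ((Order.lt_succ j).trans hj1)).map fun tj =>
    (S.hD.2.2 (μ.ord * j) (S.bslt ((Order.lt_succ j).trans hj1)) (S.C.obj (j + 1) hj1)
      (S.hC.2.2 j hj1 (S.D.obj (μ.ord * j) (S.blt ((Order.lt_succ j).trans hj1))) tj
        (S.sizeD _)).choose (S.sizeC _)).choose ≫
      S.D.map (μ.ord * j + 1) (μ.ord * (j + 1)) (S.bsle j) (S.blt hj1)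

open scoped Classical in
noncomputable def flim (i : Ordinal.{u}) (_ : Order.IsSuccLimit i) (ih : ∀ j < i, S.Mot j) : S.Mot i := fun hi =>
  if h : ∃ t : S.C.obj i hi ⟶ S.D.obj (μ.ord * i) (S.blt hi),
      ∀ (j : Ordinal.{u}) (hji : j < i)
        (tj : S.C.obj j (hji.trans hi) ⟶ S.D.obj (μ.ord * j) (S.blt (hji.trans hi))),
        ih j hji (hji.trans hi) = some tj →
          S.C.map j i hji.le hi ≫ t =
            tj ≫ S.D.map (μ.ord * j) (μ.ord * i) (S.ble hji.le) (S.blt hi)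
  then some h.choose else none

noncomputable def f (i : Ordinal.{u}) : S.Mot i :=
  Ordinal.limitRecOn i S.fzero S.fsucc S.flim

lemma f_zero : S.f 0 = S.fzero := Ordinal.limitRecOn_zero _ _ _

lemma f_succ (j : Ordinal.{u}) : S.f (j + 1) = S.fsucc j (S.f j) :=
  Ordinal.limitRecOn_succ _ _ _ _

lemma f_limit (i : Ordinal.{u}) (h : Order.IsSuccLimit i) :
    S.f i = S.flim i h (fun j _ => S.f j) :=
  Ordinal.limitRecOn_limit _ _ _ _ _

/-- Naturality of the family below `i`. -/
def NatAt (i : Ordinal.{u}) (hi : i < δ)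
    (t : S.C.obj i hi ⟶ S.D.obj (μ.ord * i) (S.blt hi)) : Prop :=
  ∀ (j : Ordinal.{u}) (hji : j < i)
    (tj : S.C.obj j (hji.trans hi) ⟶ S.D.obj (μ.ord * j) (S.blt (hji.trans hi))),
    S.f j (hji.trans hi) = some tj →
      S.C.map j i hji.le hi ≫ t =
        tj ≫ S.D.map (μ.ord * j) (μ.ord * i) (S.ble hji.le) (S.blt hi)

theorem f_spec : ∀ (i : Ordinal.{u}) (hi : i < δ),
    ∃ t, S.f i hi = some t ∧ S.NatAt i hi t := by
  intro i
  induction i using Ordinal.induction with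
  | _ i IH =>
    intro hi
    rcases Ordinal.zero_or_succ_or_isSuccLimit i with h0 | ⟨j, rfl⟩ | hlim
    · subst h0
      refine ⟨eqToHom (S.hM0.trans (S.hN0.symm.trans
          (OChain_obj_congr S.D (mul_zero μ.ord).symm S.h0ε))), ?_, ?_⟩
      · rw [S.f_zero]; rfl
      · intro j hji
        exact absurd hji (not_lt_zero)
    · -- successor case; `i = Order.succ j`, defeq `j + 1`
      show ∃ t, S.f (j + 1) hi = some t ∧ S.NatAt (j + 1) hi t
      have hj : j < δ := (Order.lt_succ j).trans hi
      obtain ⟨tj, hfj, hnatj⟩ := IH j (Order.lt_succ j) hj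
      have key : S.f (j + 1) hi = some
          ((S.hD.2.2 (μ.ord * j) (S.bslt hj) (S.C.obj (j + 1) hi)
            (S.hC.2.2 j hi (S.D.obj (μ.ord * j) (S.blt hj)) tj (S.sizeD _)).choose
            (S.sizeC _)).choose ≫
            S.D.map (μ.ord * j + 1) (μ.ord * (j + 1)) (S.bsle j) (S.blt hi)) := by
        rw [S.f_succ]
        simp only [fsucc]
        rw [hfj]
        rfl
      set hg := S.hC.2.2 j hi (S.D.obj (μ.ord * j) (S.blt hj)) tj (S.sizeD _) with hgdef
      set ht := S.hD.2.2 (μ.ord * j) (S.bslt hj) (S.C.obj (j + 1) hi) hg.choose (S.sizeC _)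
        with htdef
      have step : S.C.map j (j + 1) ((le_self_add (a := j) (b := 1))) hi ≫
          (ht.choose ≫ S.D.map (μ.ord * j + 1) (μ.ord * (j + 1)) (S.bsle j) (S.blt hi)) =
          tj ≫ S.D.map (μ.ord * j) (μ.ord * (j + 1)) (S.ble ((le_self_add (a := j) (b := 1))))
            (S.blt hi) := by
        have e1 : tj ≫ hg.choose = S.C.map j (j + 1) ((le_self_add (a := j) (b := 1))) hi :=
          hg.choose_spec
        have e2 : hg.choose ≫ ht.choose =
            S.D.map (μ.ord * j) (μ.ord * j + 1) ((le_self_add (b := 1))) (S.bslt hj) :=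
          ht.choose_spec
        have A : S.C.map j (j + 1) ((le_self_add (a := j) (b := 1))) hi ≫
            (ht.choose ≫ S.D.map (μ.ord * j + 1) (μ.ord * (j + 1)) (S.bsle j) (S.blt hi)) =
            (tj ≫ hg.choose) ≫
              (ht.choose ≫ S.D.map (μ.ord * j + 1) (μ.ord * (j + 1)) (S.bsle j)
                (S.blt hi)) := by rw [e1]
        refine A.trans ?_
        rw [Category.assoc, ← Category.assoc hg.choose, e2, ← S.D.map_comp]
      refine ⟨_, key, ?_⟩
      intro j' hj' tj' hfj'
      rcases (Order.lt_succ_iff_of_not_isMax (not_isMax j)).1 hj' |>.lt_or_eq with hlt | heq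
      · -- j' < j
        have hnat := hnatj j' hlt tj' hfj'
        rw [S.C.map_comp j' j (j + 1) hlt.le ((le_self_add (a := j) (b := 1))) hi,
          Category.assoc, step, ← Category.assoc, hnat, Category.assoc, ← S.D.map_comp]
      · -- j' = j
        subst heq
        have : tj' = tj := Option.some.inj (hfj'.symm.trans hfj).symm |>.symm
        subst this
        exact step
    · -- limit case
      have hcol := (S.hC.1 i hi hlim).some
      have hex : ∃ t : S.C.obj i hi ⟶ S.D.obj (μ.ord * i) (S.blt hi),
          ∀ (j : Ordinal.{u}) (hji : j < i)
            (tj : S.C.obj j (hji.trans hi) ⟶ S.D.obj (μ.ord * j) (S.blt (hji.trans hi))),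
            (fun j _ => S.f j) j hji (hji.trans hi) = some tj →
              S.C.map j i hji.le hi ≫ t =
                tj ≫ S.D.map (μ.ord * j) (μ.ord * i) (S.ble hji.le) (S.blt hi) := by
        let cc : Cocone (S.C.diag i hi.le) :=
          { pt := S.D.obj (μ.ord * i) (S.blt hi)
            ι :=
              { app := fun j =>
                  (IH j.1 j.2 (j.2.trans hi)).choose ≫
                    S.D.map (μ.ord * j.1) (μ.ord * i) (S.ble j.2.le) (S.blt hi)
                naturality := by
                  intro j k fjk
                  have hjk : j.1 ≤ k.1 := leOfHom fjk
                  simp only [OChain.diag, Functor.const_obj_obj, Functor.const_obj_map,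
                    Category.comp_id]
                  rcases hjk.lt_or_eq with hlt | heq
                  · have hnat := (IH k.1 k.2 (k.2.trans hi)).choose_spec.2 j.1 hlt
                      (IH j.1 j.2 (j.2.trans hi)).choose
                      (IH j.1 j.2 (j.2.trans hi)).choose_spec.1
                    rw [← Category.assoc, hnat, Category.assoc, ← S.D.map_comp]
                  · have : j = k := Subtype.ext heq
                    subst this
                    rw [S.C.map_id, Category.id_comp]
            } }
        refine ⟨hcol.desc cc, ?_⟩
        intro j hji tj hfj
        have hfac := hcol.fac cc ⟨j, hji⟩
        have heq : (IH j hji (hji.trans hi)).choose = tj :=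
          Option.some.inj (((IH j hji (hji.trans hi)).choose_spec.1).symm.trans hfj)
        rw [← heq]
        simp only [OChain.coconeAt, cc] at hfac
        exact hfac
      refine ⟨hex.choose, ?_, ?_⟩
      · rw [S.f_limit i hlim]
        simp only [flim]
        rw [dif_pos hex]
      · exact hex.choose_spec

noncomputable def F (i : Ordinal.{u}) (hi : i < δ) :
    S.C.obj i hi ⟶ S.D.obj (μ.ord * i) (S.blt hi) :=
  (S.f_spec i hi).choose

lemma hF (i : Ordinal.{u}) (hi : i < δ) : S.f i hi = some (S.F i hi) :=
  (S.f_spec i hi).choose_spec.1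

lemma F_nat {j i : Ordinal.{u}} (hji : j ≤ i) (hi : i < δ) :
    S.C.map j i hji hi ≫ S.F i hi =
      S.F j (lt_of_le_of_lt hji hi) ≫
        S.D.map (μ.ord * j) (μ.ord * i) (S.ble hji) (S.blt hi) := by
  rcases hji.lt_or_eq with hlt | heq
  · exact (S.f_spec i hi).choose_spec.2 j hlt (S.F j _) (S.hF j _)
  · subst heq
    rw [S.C.map_id, S.D.map_id, Category.id_comp, Category.comp_id]

noncomputable def g (i : Ordinal.{u}) (hi1 : i + 1 < δ) :
    S.D.obj (μ.ord * i) (S.blt ((Order.lt_succ i).trans hi1)) ⟶ S.C.obj (i + 1) hi1 :=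
  (S.hC.2.2 i hi1 _ (S.F i ((Order.lt_succ i).trans hi1)) (S.sizeD _)).choose

lemma g_tri1 (i : Ordinal.{u}) (hi1 : i + 1 < δ) :
    S.F i ((Order.lt_succ i).trans hi1) ≫ S.g i hi1 =
      S.C.map i (i + 1) ((le_self_add (a := i) (b := 1))) hi1 :=
  (S.hC.2.2 i hi1 _ (S.F i ((Order.lt_succ i).trans hi1)) (S.sizeD _)).choose_spec

lemma g_tri2 (i : Ordinal.{u}) (hi1 : i + 1 < δ) :
    S.g i hi1 ≫ S.F (i + 1) hi1 =
      S.D.map (μ.ord * i) (μ.ord * (i + 1)) (S.ble ((le_self_add (a := i) (b := 1))))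
        (S.blt hi1) := by
  have hi : i < δ := (Order.lt_succ i).trans hi1
  have key : S.f (i + 1) hi1 = some
      ((S.hD.2.2 (μ.ord * i) (S.bslt hi) (S.C.obj (i + 1) hi1)
        (S.hC.2.2 i hi1 (S.D.obj (μ.ord * i) (S.blt hi)) (S.F i hi) (S.sizeD _)).choose
        (S.sizeC _)).choose ≫
        S.D.map (μ.ord * i + 1) (μ.ord * (i + 1)) (S.bsle i) (S.blt hi1)) := by
    rw [S.f_succ]
    simp only [fsucc]
    rw [S.hF i hi]
    rfl
  have e0 : S.F (i + 1) hi1 =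
      (S.hD.2.2 (μ.ord * i) (S.bslt hi) (S.C.obj (i + 1) hi1)
        (S.hC.2.2 i hi1 (S.D.obj (μ.ord * i) (S.blt hi)) (S.F i hi) (S.sizeD _)).choose
        (S.sizeC _)).choose ≫
        S.D.map (μ.ord * i + 1) (μ.ord * (i + 1)) (S.bsle i) (S.blt hi1) := by
    exact Option.some.inj ((S.hF (i + 1) hi1).symm.trans key)
  have e2 := (S.hD.2.2 (μ.ord * i) (S.bslt hi) (S.C.obj (i + 1) hi1)
    (S.hC.2.2 i hi1 (S.D.obj (μ.ord * i) (S.blt hi)) (S.F i hi) (S.sizeD _)).choose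
    (S.sizeC _)).choose_spec
  have hgg : S.g i hi1 =
      (S.hC.2.2 i hi1 (S.D.obj (μ.ord * i) (S.blt hi)) (S.F i hi) (S.sizeD _)).choose := rfl
  rw [hgg, e0, ← Category.assoc, e2, ← S.D.map_comp]

lemma gF_nat {i i' : Ordinal.{u}} (hii' : i ≤ i') (hi1' : i' + 1 < δ)
    (hi1 : i + 1 < δ) :
    S.D.map (μ.ord * i) (μ.ord * i') (S.ble hii')
        (S.blt ((Order.lt_succ i').trans hi1')) ≫ S.g i' hi1' =
      S.g i hi1 ≫ S.C.map (i + 1) (i' + 1) (add_le_add_left hii' 1) hi1' := by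
  haveI := W.allMono (S.F (i' + 1) hi1')
  rw [← cancel_mono (S.F (i' + 1) hi1')]
  rw [Category.assoc, S.g_tri2, Category.assoc, S.F_nat (add_le_add_left hii' 1) hi1',
    ← Category.assoc, S.g_tri2, ← S.D.map_comp, ← S.D.map_comp]

lemma cocone_w {δ' : Ordinal.{u}} (E : OChain W.K δ') (c : Cocone (E.diag δ' le_rfl))
    {a b : Ordinal.{u}} (hab : a ≤ b) (ha : a < δ') (hb : b < δ') :
    E.map a b hab hb ≫ c.ι.app ⟨b, hb⟩ = c.ι.app ⟨a, ha⟩ :=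
  c.w (homOfLE hab : (⟨a, ha⟩ : {x : Ordinal.{u} // x < δ'}) ⟶ ⟨b, hb⟩)

noncomputable def phiCocone (cD : Cocone (S.D.diag (μ.ord * δ) le_rfl)) :
    Cocone (S.C.diag δ le_rfl) where
  pt := cD.pt
  ι :=
    { app := fun j => S.F j.1 j.2 ≫ cD.ι.app ⟨μ.ord * j.1, S.blt j.2⟩
      naturality := by
        intro j k fjk
        have hjk : j.1 ≤ k.1 := leOfHom fjk
        simp only [OChain.diag, Functor.const_obj_obj, Functor.const_obj_map,
          Category.comp_id]
        rw [← Category.assoc, S.F_nat hjk k.2, Category.assoc,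
          cocone_w S.D cD (S.ble hjk) (S.blt j.2) (S.blt k.2)] }

noncomputable def psiLeg (cC : Cocone (S.C.diag δ le_rfl)) {j : Ordinal.{u}}
    (hj : j < μ.ord * δ) {i : Ordinal.{u}} (hi : i < δ) (hle : j ≤ μ.ord * i) :
    S.D.obj j hj ⟶ cC.pt :=
  S.D.map j (μ.ord * i) hle (S.blt hi) ≫ S.g i (S.slt hi) ≫ cC.ι.app ⟨i + 1, S.slt hi⟩

lemma psiLeg_mono (cC : Cocone (S.C.diag δ le_rfl)) {j : Ordinal.{u}} (hj : j < μ.ord * δ)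
    {i i' : Ordinal.{u}} (hii' : i ≤ i') (hi' : i' < δ) (hle : j ≤ μ.ord * i) :
    S.psiLeg cC hj (lt_of_le_of_lt hii' hi') hle =
      S.psiLeg cC hj hi' (hle.trans (S.ble hii')) := by
  unfold psiLeg
  conv_rhs => rw [S.D.map_comp j (μ.ord * i) (μ.ord * i') hle (S.ble hii') (S.blt hi'),
    Category.assoc]
  conv_rhs => erw [← Category.assoc (S.D.map (μ.ord * i) (μ.ord * i') (S.ble hii')
      (S.blt hi')), S.gF_nat hii' (S.slt hi') (S.slt (lt_of_le_of_lt hii' hi')),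
    Category.assoc, cocone_w S.C cC (add_le_add_left hii' 1)
      (S.slt (lt_of_le_of_lt hii' hi')) (S.slt hi')]

lemma psiLeg_irrel (cC : Cocone (S.C.diag δ le_rfl)) {j : Ordinal.{u}} (hj : j < μ.ord * δ)
    {i i' : Ordinal.{u}} (hi : i < δ) (hi' : i' < δ) (hle : j ≤ μ.ord * i)
    (hle' : j ≤ μ.ord * i') :
    S.psiLeg cC hj hi hle = S.psiLeg cC hj hi' hle' := by
  rcases le_total i i' with h | h
  · exact S.psiLeg_mono cC hj h hi' hle
  · exact (S.psiLeg_mono cC hj h hi hle').symm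

noncomputable def psiCocone (cC : Cocone (S.C.diag δ le_rfl)) :
    Cocone (S.D.diag (μ.ord * δ) le_rfl) where
  pt := cC.pt
  ι :=
    { app := fun j => S.psiLeg cC (lt_of_lt_of_le j.2 le_rfl)
        (S.exIdx j.2).choose_spec.1 (S.exIdx j.2).choose_spec.2
      naturality := by
        intro j k fjk
        have hjk : j.1 ≤ k.1 := leOfHom fjk
        simp only [OChain.diag, Functor.const_obj_obj, Functor.const_obj_map,
          Category.comp_id]
        have key : S.D.map j.1 k.1 hjk (lt_of_lt_of_le k.2 le_rfl) ≫
            S.psiLeg cC (lt_of_lt_of_le k.2 le_rfl) (S.exIdx k.2).choose_spec.1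
              (S.exIdx k.2).choose_spec.2 =
            S.psiLeg cC (lt_of_lt_of_le j.2 le_rfl) (S.exIdx k.2).choose_spec.1
              (hjk.trans (S.exIdx k.2).choose_spec.2) := by
          unfold psiLeg
          rw [← Category.assoc, ← S.D.map_comp]
        rw [key]
        exact S.psiLeg_irrel cC _ _ _ _ _ }

noncomputable def mainIso {cC : Cocone (S.C.diag δ le_rfl)}
    {cD : Cocone (S.D.diag (μ.ord * δ) le_rfl)} (LC : IsColimit cC) (LD : IsColimit cD) :
    cC.pt ≅ cD.pt where
  hom := LC.desc (S.phiCocone cD)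
  inv := LD.desc (S.psiCocone cC)
  hom_inv_id := by
    refine LC.hom_ext fun j => ?_
    have h1 : cC.ι.app j ≫ LC.desc (S.phiCocone cD) ≫ LD.desc (S.psiCocone cC) =
        cC.ι.app j := by
      erw [← Category.assoc, LC.fac (S.phiCocone cD) j]
      show (S.F j.1 j.2 ≫ cD.ι.app ⟨μ.ord * j.1, S.blt j.2⟩) ≫ _ = _
      erw [Category.assoc, LD.fac (S.psiCocone cC) ⟨μ.ord * j.1, S.blt j.2⟩]
      show S.F j.1 j.2 ≫ S.psiLeg cC (lt_of_lt_of_le (S.blt j.2) le_rfl)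
        (S.exIdx (S.blt j.2)).choose_spec.1 (S.exIdx (S.blt j.2)).choose_spec.2 =
        cC.ι.app j
      rw [S.psiLeg_irrel cC (lt_of_lt_of_le (S.blt j.2) le_rfl)
        (S.exIdx (S.blt j.2)).choose_spec.1 j.2 (S.exIdx (S.blt j.2)).choose_spec.2
        (le_refl (μ.ord * j.1))]
      unfold psiLeg
      erw [S.D.map_id, Category.id_comp, ← Category.assoc, S.g_tri1]
      exact cocone_w S.C cC ((le_self_add (a := j.1) (b := 1))) j.2 (S.slt j.2)
    exact h1.trans (Category.comp_id (cC.ι.app j)).symm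
  inv_hom_id := by
    refine LD.hom_ext fun j => ?_
    have h1 : cD.ι.app j ≫ LD.desc (S.psiCocone cC) ≫ LC.desc (S.phiCocone cD) =
        cD.ι.app j := ?_
    · exact h1.trans (Category.comp_id (cD.ι.app j)).symm
    erw [← Category.assoc, LD.fac (S.psiCocone cC) j]
    show S.psiLeg cC (lt_of_lt_of_le j.2 le_rfl) (S.exIdx j.2).choose_spec.1
      (S.exIdx j.2).choose_spec.2 ≫ _ = cD.ι.app j
    unfold psiLeg
    have hi := (S.exIdx j.2).choose_spec.1
    erw [Category.assoc, Category.assoc, LC.fac (S.phiCocone cD)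
      ⟨(S.exIdx j.2).choose + 1, S.slt hi⟩]
    show S.D.map j.1 _ _ _ ≫ S.g _ _ ≫ S.F _ (S.slt hi) ≫
      cD.ι.app ⟨μ.ord * ((S.exIdx j.2).choose + 1), S.blt (S.slt hi)⟩ = cD.ι.app j
    erw [← Category.assoc (S.g _ _), S.g_tri2, ← Category.assoc, ← S.D.map_comp,
      cocone_w S.D cD _ (lt_of_lt_of_le j.2 le_rfl) (S.blt (S.slt hi))]

end LSetup

end CAECAux
open CAEC Cardinal in
/-- Lemma 5.4: in a weak `ℵ₀`-CAEC, if `M` has size `μ` and `M̄`, `N̄`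
are respectively a `(μ, δ)`-limit object and a `(μ, μ×δ)`-limit object over `M`, with
`δ < μ⁺` a limit ordinal, then `M̄ ≅ N̄`. -/
theorem WeakCAEC.limit_obj_unique_mul {lam : Cardinal.{u}}
    (W : WeakCAEC Cardinal.aleph0 lam)
    (μ : Cardinal.{u}) (δ : Ordinal.{u}) (hδ : Order.IsSuccLimit δ) (hδμ : δ < (Order.succ μ).ord)
    (M Mbar Nbar : W.K) (hM : W.size M = μ)
    (h₁ : W.IsLimitObjOver μ δ M Mbar) (h₂ : W.IsLimitObjOver μ (μ.ord * δ) M Nbar) :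
    Nonempty (Mbar ≅ Nbar) := by
  obtain ⟨-, C, hC, ⟨h0δ, hM0⟩, cC, hptC, ⟨LC⟩⟩ := h₁
  obtain ⟨hε, D, hD, ⟨h0ε, hN0⟩, cD, hptD, ⟨LD⟩⟩ := h₂
  let S : CAECAux.LSetup W μ δ := ⟨hδ, hε, C, D, hC, hD, M, h0δ, h0ε, hM0, hN0⟩
  exact ⟨(CategoryTheory.eqToIso hptC).symm ≪≫ CAECAux.LSetup.mainIso S LC LD ≪≫
    CategoryTheory.eqToIso hptD⟩
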